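/- Under the inexactness condition of VMILAn (h(ỹ) − h(y) ≤ −(τ/2)h_γ(ỹ), with y the exact minimizer of h), if α ∈ (0, α_max] and D has eigenvalues in [1/μ, μ], then (1/(4 α_max μ)) ‖ỹ − x^(k)‖² ≤ −(1+τ) h_γ(ỹ). -/

import Mathlib

open Matrix

/-- The Euclidean norm on `ℝⁿ`. -/
noncomputable def enorm {n : ℕ} (x : Fin n → ℝ) : ℝ := Real.sqrt (∑ i, x i ^ 2)

/-- Convexity of an extended-real-valued function. -/
def ERealConvex {n : ℕ} (Ψ : (Fin n → ℝ) → EReal) : Prop :=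
  ∀ x y : Fin n → ℝ, ∀ t : ℝ, 0 ≤ t → t ≤ 1 →
    Ψ (t • x + (1 - t) • y) ≤ ((t : ℝ) : EReal) * Ψ x + ((1 - t : ℝ) : EReal) * Ψ y

section Aux

variable {n : ℕ} {D : Matrix (Fin n) (Fin n) ℝ}

/-- The quadratic part of the VMILA models. -/
def auxq (g xk : Fin n → ℝ) (c : ℝ) (D : Matrix (Fin n) (Fin n) ℝ) (x : Fin n → ℝ) : ℝ :=
  g ⬝ᵥ (x - xk) + c * ((x - xk) ⬝ᵥ D.mulVec (x - xk))

lemma aux_Bsymm (hsymm : D.IsSymm) (u v : Fin n → ℝ) :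
    u ⬝ᵥ D.mulVec v = v ⬝ᵥ D.mulVec u := by
  rw [dotProduct_mulVec, ← mulVec_transpose, hsymm.eq, dotProduct_comm]

lemma aux_Bpos (hpd : D.PosDef) (u : Fin n → ℝ) : 0 ≤ u ⬝ᵥ D.mulVec u := by
  rcases eq_or_ne u 0 with rfl | hu
  · simp
  · have := hpd.dotProduct_mulVec_pos hu; simpa using this.le

lemma aux_Bexpand (hsymm : D.IsSymm) (u v : Fin n → ℝ) (s t : ℝ) :
    (s • u + t • v) ⬝ᵥ D.mulVec (s • u + t • v)
      = s^2 * (u ⬝ᵥ D.mulVec u) + 2*s*t*(u ⬝ᵥ D.mulVec v) + t^2 * (v ⬝ᵥ D.mulVec v) := by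
  simp [mulVec_add, mulVec_smul, dotProduct_add, add_dotProduct, smul_dotProduct,
    dotProduct_smul, smul_eq_mul, aux_Bsymm hsymm u v]
  ring

lemma aux_Btriangle (hsymm : D.IsSymm) (hpd : D.PosDef) (u v : Fin n → ℝ) :
    (u + v) ⬝ᵥ D.mulVec (u + v) ≤ 2 * (u ⬝ᵥ D.mulVec u) + 2 * (v ⬝ᵥ D.mulVec v) := by
  have h1 := aux_Bpos hpd (u - v)
  have e1 := aux_Bexpand hsymm u v 1 1
  have e2 := aux_Bexpand hsymm u v 1 (-1)
  simp only [one_smul, neg_one_smul, one_pow, mul_one, mul_neg_one] at e1 e2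
  have huv : u + -v = u - v := by abel
  rw [huv] at e2
  nlinarith [e1, e2]

lemma aux_Bneg (u : Fin n → ℝ) : (-u) ⬝ᵥ D.mulVec (-u) = u ⬝ᵥ D.mulVec u := by
  simp [mulVec_neg]

lemma aux_Blower (hpd : D.PosDef) {μ : ℝ}
    (hspec : spectrum ℝ D ⊆ Set.Icc (1/μ) μ) (z : Fin n → ℝ) :
    (1/μ) * (∑ i, z i ^ 2) ≤ z ⬝ᵥ D.mulVec z := by
  classical
  have hH := hpd.1
  set U : Matrix (Fin n) (Fin n) ℝ := (hH.eigenvectorUnitary : Matrix (Fin n) (Fin n) ℝ) with hU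
  set w : Fin n → ℝ := (star U) *ᵥ z with hw
  have hUstar : U * star U = 1 := (Matrix.mem_unitaryGroup_iff).mp hH.eigenvectorUnitary.2
  have hvm : z ᵥ* U = w := by
    rw [hw, star_eq_conjTranspose, conjTranspose_eq_transpose_of_trivial, mulVec_transpose]
  have hdiag : (RCLike.ofReal ∘ hH.eigenvalues : Fin n → ℝ) = hH.eigenvalues := by
    ext i; simp
  have key : z ⬝ᵥ D.mulVec z = ∑ i, hH.eigenvalues i * w i ^ 2 := by
    conv_lhs => rw [hH.spectral_theorem]
    rw [hdiag, Unitary.conjStarAlgAut_apply, ← mulVec_mulVec, ← mulVec_mulVec, dotProduct_mulVec, ← hw, hvm]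
    simp only [dotProduct, mulVec_diagonal]
    exact Finset.sum_congr rfl (by intros; ring)
  have keyn : ∑ i, w i ^ 2 = ∑ i, z i ^ 2 := by
    have h2 : w ⬝ᵥ w = z ⬝ᵥ z := by
      conv_lhs => rw [hw]
      rw [dotProduct_mulVec, ← hw, ← hvm, vecMul_vecMul, hUstar, vecMul_one]
    simpa [dotProduct, sq] using h2
  rw [key, ← keyn, Finset.mul_sum]
  apply Finset.sum_le_sum
  intro i _
  have hev := hspec (hH.eigenvalues_mem_spectrum_real i)
  nlinarith [hev.1, sq_nonneg (w i)]

lemma aux_qid (hsymm : D.IsSymm) (g xk : Fin n → ℝ) (c t : ℝ) (x y : Fin n → ℝ) :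
    auxq g xk c D (t • x + (1-t) • y)
      = t * auxq g xk c D x + (1-t) * auxq g xk c D y
        - t*(1-t) * (c * ((x-y) ⬝ᵥ D.mulVec (x-y))) := by
  have hsub : (t • x + (1-t) • y) - xk = t • (x - xk) + (1-t) • (y - xk) := by module
  have hxy : (x - xk) - (y - xk) = x - y := by abel
  unfold auxq
  rw [hsub, ← hxy]
  have e1 := aux_Bexpand hsymm (x - xk) (y - xk) t (1-t)
  have e2 := aux_Bexpand hsymm (x - xk) (y - xk) 1 (-1)
  simp only [one_smul, neg_one_smul, one_pow, mul_one, mul_neg_one] at e2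
  have huv : (x - xk) + -(y - xk) = (x - xk) - (y - xk) := by abel
  rw [huv] at e2
  rw [e1, e2, dotProduct_add, dotProduct_smul, dotProduct_smul, smul_eq_mul, smul_eq_mul]
  ring

end Aux

theorem stmt8 {n : ℕ} (f₁ : (Fin n → ℝ) → EReal)
    (hbot : ∀ x, f₁ x ≠ ⊥) (hproper : ∃ x, f₁ x ≠ ⊤)
    (hconv : ERealConvex f₁) (hlsc : LowerSemicontinuous f₁)
    (f₀ : (Fin n → ℝ) → ℝ) (f₀' : (Fin n → ℝ) →L[ℝ] ℝ)
    (xk : Fin n → ℝ) (hdiff : HasFDerivAt f₀ f₀' xk)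
    (g : Fin n → ℝ) (hgrad : ∀ u : Fin n → ℝ, f₀' u = g ⬝ᵥ u)
    (hdom : f₁ xk ≠ ⊤)
    (γ : ℝ) (hγ01 : γ ∈ Set.Icc (0 : ℝ) 1) (τ : ℝ) (hτ : 0 < τ)
    (μ : ℝ) (hμ : 1 ≤ μ) (α αmax : ℝ) (hα : 0 < α) (hαmax : α ≤ αmax)
    (D : Matrix (Fin n) (Fin n) ℝ) (hsymm : D.IsSymm) (hpd : D.PosDef)
    (hspec : spectrum ℝ D ⊆ Set.Icc (1 / μ) μ)
    (hgam h : (Fin n → ℝ) → EReal)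
    (hgamdef : ∀ x : Fin n → ℝ, hgam x =
      ((g ⬝ᵥ (x - xk) + γ / (2 * α) * ((x - xk) ⬝ᵥ D.mulVec (x - xk)) : ℝ) : EReal)
        + f₁ x - f₁ xk)
    (hdef : ∀ x : Fin n → ℝ, h x =
      ((g ⬝ᵥ (x - xk) + 1 / (2 * α) * ((x - xk) ⬝ᵥ D.mulVec (x - xk)) : ℝ) : EReal)
        + f₁ x - f₁ xk)
    (y : Fin n → ℝ) (hmin : ∀ x, h y ≤ h x)
    (huniq : ∀ z : Fin n → ℝ, (∀ x, h z ≤ h x) → z = y)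
    (ytil : Fin n → ℝ)
    (hinexact : h ytil - h y ≤ ((-(τ / 2) : ℝ) : EReal) * hgam ytil) :
    ((1 / (4 * αmax * μ) * _root_.enorm (ytil - xk) ^ 2 : ℝ) : EReal)
      ≤ ((-(1 + τ) : ℝ) : EReal) * hgam ytil := by
  have hdef' : ∀ x : Fin n → ℝ, h x =
      ((auxq g xk (1 / (2 * α)) D x : ℝ) : EReal) + f₁ x - f₁ xk := hdef
  have hgam' : ∀ x : Fin n → ℝ, hgam x =
      ((auxq g xk (γ / (2 * α)) D x : ℝ) : EReal) + f₁ x - f₁ xk := hgamdef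
  obtain ⟨fk, hfk⟩ : ∃ r : ℝ, f₁ xk = (r : EReal) :=
    ⟨(f₁ xk).toReal, (EReal.coe_toReal hdom (hbot xk)).symm⟩
  have hqxk : auxq g xk (1 / (2 * α)) D xk = 0 := by simp [auxq]
  have hxk0 : h xk = (0 : EReal) := by
    rw [hdef' xk, hfk, hqxk]
    norm_cast
    ring
  have hy0 : h y ≤ 0 := hxk0 ▸ hmin xk
  -- f₁ y is finite
  have hytop : f₁ y ≠ ⊤ := by
    intro htop
    have : h y = ⊤ := by
      rw [hdef' y, htop, hfk, EReal.coe_add_top, EReal.top_sub_coe]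
    rw [this] at hy0
    exact absurd hy0 (by simp)
  obtain ⟨fy, hfy⟩ : ∃ r : ℝ, f₁ y = (r : EReal) :=
    ⟨(f₁ y).toReal, (EReal.coe_toReal hytop (hbot y)).symm⟩
  -- f₁ ytil is finite
  have httop : f₁ ytil ≠ ⊤ := by
    intro htop
    have h1 : h ytil = ⊤ := by
      rw [hdef' ytil, htop, hfk, EReal.coe_add_top, EReal.top_sub_coe]
    have hhy0 : h y = ((auxq g xk (1 / (2 * α)) D y + fy - fk : ℝ) : EReal) := by
      rw [hdef' y, hfy, hfk]; norm_cast
    have h3 : h ytil - h y = ⊤ := by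
      rw [h1, hhy0, EReal.top_sub_coe]
    have h2 : hgam ytil = ⊤ := by
      rw [hgam' ytil, htop, hfk, EReal.coe_add_top, EReal.top_sub_coe]
    rw [h3, h2, EReal.mul_top_of_neg
      (by exact_mod_cast neg_neg_of_pos (by positivity : (0:ℝ) < τ / 2))] at hinexact
    exact absurd hinexact (by simp)
  obtain ⟨ft, hft⟩ : ∃ r : ℝ, f₁ ytil = (r : EReal) :=
    ⟨(f₁ ytil).toReal, (EReal.coe_toReal httop (hbot ytil)).symm⟩
  -- real names
  obtain ⟨BB, hBB⟩ : ∃ r : ℝ, r = (ytil - xk) ⬝ᵥ D.mulVec (ytil - xk) := ⟨_, rfl⟩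
  have hBBpos : 0 ≤ BB := hBB ▸ aux_Bpos hpd _
  obtain ⟨Ht, hHtdef⟩ : ∃ r : ℝ, r = auxq g xk (1 / (2 * α)) D ytil + ft - fk := ⟨_, rfl⟩
  obtain ⟨Hy, hHydef⟩ : ∃ r : ℝ, r = auxq g xk (1 / (2 * α)) D y + fy - fk := ⟨_, rfl⟩
  obtain ⟨G, hGdef⟩ : ∃ r : ℝ, r = auxq g xk (γ / (2 * α)) D ytil + ft - fk := ⟨_, rfl⟩
  have hht : h ytil = ((Ht : ℝ) : EReal) := by
    rw [hdef' ytil, hft, hfk, hHtdef]; norm_cast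
  have hhy : h y = ((Hy : ℝ) : EReal) := by
    rw [hdef' y, hfy, hfk, hHydef]; norm_cast
  have hgamy : hgam ytil = ((G : ℝ) : EReal) := by
    rw [hgam' ytil, hft, hfk, hGdef]; norm_cast
  -- the inexactness condition in real form
  have hineq : Ht - Hy ≤ -(τ/2) * G := by
    rw [hht, hhy, ← EReal.coe_sub, hgamy, ← EReal.coe_mul] at hinexact
    exact_mod_cast hinexact
  -- G ≤ Ht
  have hGle : G ≤ Ht := by
    have hdiff : Ht - G = (1 - γ) / (2 * α) * BB := by
      rw [hHtdef, hGdef, hBB]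
      simp only [auxq]
      ring
    have hnn : 0 ≤ (1 - γ) / (2 * α) * BB :=
      mul_nonneg (div_nonneg (by linarith [hγ01.2]) (by linarith)) hBBpos
    linarith
  -- strong convexity of h at the minimizer (real form)
  have strong : ∀ (x : Fin n → ℝ) (fx : ℝ), f₁ x = (fx : EReal) →
      1 / (2 * α) * ((x - y) ⬝ᵥ D.mulVec (x - y))
        ≤ (auxq g xk (1 / (2 * α)) D x + fx - fk) - Hy := by
    intro x fx hfx
    obtain ⟨Q, hQ⟩ : ∃ r : ℝ, r = 1 / (2 * α) * ((x - y) ⬝ᵥ D.mulVec (x - y)) := ⟨_, rfl⟩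
    rw [← hQ]
    have step : ∀ t ∈ Set.Ioo (0:ℝ) 1,
        (1 - t) * Q ≤ (auxq g xk (1 / (2 * α)) D x + fx - fk) - Hy := by
      intro t ht
      have hcomb := hconv x y t ht.1.le ht.2.le
      rw [hfx, hfy, ← EReal.coe_mul, ← EReal.coe_mul, ← EReal.coe_add] at hcomb
      have hztop : f₁ (t • x + (1 - t) • y) ≠ ⊤ :=
        ne_top_of_le_ne_top (EReal.coe_ne_top _) hcomb
      obtain ⟨fz, hfz⟩ : ∃ r : ℝ, f₁ (t • x + (1 - t) • y) = (r : EReal) :=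
        ⟨_, (EReal.coe_toReal hztop (hbot _)).symm⟩
      have hfzle : fz ≤ t * fx + (1 - t) * fy := by
        rw [hfz] at hcomb
        exact_mod_cast hcomb
      have hyz : Hy ≤ auxq g xk (1 / (2 * α)) D (t • x + (1 - t) • y) + fz - fk := by
        have hm := hmin (t • x + (1 - t) • y)
        rw [hhy, hdef' _, hfz, hfk, ← EReal.coe_add, ← EReal.coe_sub] at hm
        exact_mod_cast hm
      have hzid := aux_qid hsymm g xk (1 / (2 * α)) t x y
      rw [← hQ] at hzid
      nlinarith [ht.1, hyz, hfzle, hzid, hHydef]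
    have tend : Filter.Tendsto (fun t : ℝ => (1 - t) * Q)
        (nhdsWithin 0 (Set.Ioi 0)) (nhds Q) := by
      have hc : Continuous (fun t : ℝ => (1 - t) * Q) :=
        (continuous_const.sub continuous_id).mul continuous_const
      have := hc.tendsto 0
      simp only [sub_zero, one_mul] at this
      exact this.mono_left nhdsWithin_le_nhds
    have hev : ∀ᶠ t in nhdsWithin (0:ℝ) (Set.Ioi 0),
        (1 - t) * Q ≤ (auxq g xk (1 / (2 * α)) D x + fx - fk) - Hy := by
      filter_upwards [Ioo_mem_nhdsGT_of_mem (Set.mem_Ico.mpr ⟨le_refl 0, zero_lt_one⟩)] with t ht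
      exact step t ht
    exact le_of_tendsto tend hev
  have hQ1 : 1 / (2 * α) * ((ytil - y) ⬝ᵥ D.mulVec (ytil - y)) ≤ Ht - Hy := by
    have := strong ytil ft hft
    rw [← hHtdef] at this
    exact this
  have hQ2 : 1 / (2 * α) * ((y - xk) ⬝ᵥ D.mulVec (y - xk)) ≤ -Hy := by
    have := strong xk fk hfk
    rw [hqxk] at this
    have hflip : (xk - y) ⬝ᵥ D.mulVec (xk - y) = (y - xk) ⬝ᵥ D.mulVec (y - xk) := by
      rw [show xk - y = -(y - xk) by abel, aux_Bneg]
    rw [hflip] at this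
    linarith
  have htri : BB ≤ 2 * ((ytil - y) ⬝ᵥ D.mulVec (ytil - y))
      + 2 * ((y - xk) ⬝ᵥ D.mulVec (y - xk)) := by
    have h5 := aux_Btriangle hsymm hpd (ytil - y) (y - xk)
    rw [show ytil - y + (y - xk) = ytil - xk by abel, ← hBB] at h5
    exact h5
  -- the key bound
  have hkey : 1 / (4 * α) * BB ≤ -(1 + τ) * G := by
    have h1 : 1 / (2 * α) * ((ytil - y) ⬝ᵥ D.mulVec (ytil - y)) ≤ -(τ/2) * G := by linarith
    have h2 : 1 / (2 * α) * ((y - xk) ⬝ᵥ D.mulVec (y - xk)) ≤ -(τ/2) * G - G := by linarith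
    have e : 1 / (4 * α) * (2 * ((ytil - y) ⬝ᵥ D.mulVec (ytil - y))
        + 2 * ((y - xk) ⬝ᵥ D.mulVec (y - xk)))
        = 1 / (2 * α) * ((ytil - y) ⬝ᵥ D.mulVec (ytil - y))
          + 1 / (2 * α) * ((y - xk) ⬝ᵥ D.mulVec (y - xk)) := by
      field_simp
      ring
    have h3 : 1 / (4 * α) * BB ≤ 1 / (4 * α) * (2 * ((ytil - y) ⬝ᵥ D.mulVec (ytil - y))
        + 2 * ((y - xk) ⬝ᵥ D.mulVec (y - xk))) :=
      mul_le_mul_of_nonneg_left htri (by positivity)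
    linarith
  -- eigenvalue bound and conclusion
  have hμ0 : (0:ℝ) < μ := by linarith
  have hαmax0 : (0:ℝ) < αmax := by linarith
  have hsum : _root_.enorm (ytil - xk) ^ 2 = ∑ i, (ytil - xk) i ^ 2 := by
    rw [_root_.enorm, Real.sq_sqrt]
    positivity
  have hlow : (1/μ) * (∑ i, (ytil - xk) i ^ 2) ≤ BB := hBB ▸ aux_Blower hpd hspec (ytil - xk)
  have hfinal : 1 / (4 * αmax * μ) * _root_.enorm (ytil - xk) ^ 2 ≤ -(1 + τ) * G := by
    rw [hsum]
    have e1 : (∑ i, (ytil - xk) i ^ 2) ≤ μ * BB := by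
      have := mul_le_mul_of_nonneg_left hlow hμ0.le
      rw [← mul_assoc, mul_one_div, div_self (ne_of_gt hμ0), one_mul] at this
      linarith
    have e2 : 1 / (4 * αmax * μ) * (∑ i, (ytil - xk) i ^ 2) ≤ 1 / (4 * αmax) * BB := by
      calc 1 / (4 * αmax * μ) * (∑ i, (ytil - xk) i ^ 2)
          ≤ 1 / (4 * αmax * μ) * (μ * BB) :=
            mul_le_mul_of_nonneg_left e1 (by positivity)
        _ = 1 / (4 * αmax) * BB := by
            field_simp
    have e3 : 1 / (4 * αmax) * BB ≤ 1 / (4 * α) * BB := by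
      apply mul_le_mul_of_nonneg_right _ hBBpos
      apply one_div_le_one_div_of_le (by linarith)
      linarith
    linarith
  rw [hgamy, ← EReal.coe_mul]
  exact_mod_cast hfinal
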